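/- The monomial ideal L(λ) equals the intersection, over all integers i with 1 ≤ i ≤ m and a_i ≠ 0, of the irreducible monomial ideals ⟨x_0^{a_m+1}, x_1^{a_{m−1}+1}, …, x_{m−i−1}^{a_{i+1}+1}, x_{m−i}^{a_i}⟩ (the ideal generated by x_l^{a_{m−l}+1} for 0 ≤ l ≤ m−i−1 together with x_{m−i}^{a_i}). -/

import Mathlib

open MvPolynomial
open Fin.NatCast

noncomputable section

/-- `a_j`: the number of parts of the partition `l 1 ≥ l 2 ≥ ⋯ ≥ l r` equal to `j`. -/
def partCount (r : ℕ) (l : ℕ → ℕ) (j : ℕ) : ℕ :=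
  ((Finset.Icc 1 r).filter fun i => l i = j).card

/-- The generators of the lexicographic ideal `L(λ)`: the monomials
`x_0^{a_m} x_1^{a_{m−1}} ⋯ x_{kk−1}^{a_{m−kk+1}} · x_kk^{a_{m−kk}+1}` for `0 ≤ kk ≤ m−2`,
together with `x_0^{a_m} x_1^{a_{m−1}} ⋯ x_{m−2}^{a_2} x_{m−1}^{a_1}`. -/
def lexGens (k : Type*) [Field k] (m r : ℕ) (l : ℕ → ℕ) :
    Set (MvPolynomial (Fin (m + 1)) k) :=
  { f | ∃ kk : ℕ, kk + 2 ≤ m ∧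
      f = (∏ t ∈ Finset.range kk, X ((t : ℕ) : Fin (m + 1)) ^ partCount r l (m - t)) *
            X ((kk : ℕ) : Fin (m + 1)) ^ (partCount r l (m - kk) + 1) }
  ∪ { (∏ t ∈ Finset.range (m - 1), X ((t : ℕ) : Fin (m + 1)) ^ partCount r l (m - t)) *
        X (((m - 1 : ℕ)) : Fin (m + 1)) ^ partCount r l 1 }

/-- The lexicographic ideal `L(λ)` associated to the partition `λ`. -/
def lexIdeal (k : Type*) [Field k] (m r : ℕ) (l : ℕ → ℕ) :
    Ideal (MvPolynomial (Fin (m + 1)) k) :=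
  Ideal.span (lexGens k m r l)

namespace LexAuxProof

/-- Combinatorial lemma, backward direction. -/
lemma combA (m : ℕ) (hm : 1 ≤ m) (a c : ℕ → ℕ)
    (h : ∀ i, 1 ≤ i → i ≤ m → a i ≠ 0 →
      (∃ t, t + i + 1 ≤ m ∧ a (m - t) + 1 ≤ c t) ∨ a i ≤ c (m - i)) :
    (∃ kk, kk + 2 ≤ m ∧ (∀ t < kk, a (m - t) ≤ c t) ∧ a (m - kk) + 1 ≤ c kk) ∨
      ((∀ t < m - 1, a (m - t) ≤ c t) ∧ a 1 ≤ c (m - 1)) := by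
  by_cases hAll : ∀ t, t ≤ m - 1 → a (m - t) ≤ c t
  · right
    refine ⟨fun t ht => hAll t (by omega), ?_⟩
    have := hAll (m - 1) le_rfl
    rwa [Nat.sub_sub_self hm] at this
  · push_neg at hAll
    have hEx : ∃ t, t ≤ m - 1 ∧ c t < a (m - t) := by
      obtain ⟨t, ht, ht2⟩ := hAll; exact ⟨t, ht, by omega⟩
    classical
    obtain ⟨T, ⟨hT1, hT2⟩, hTmin⟩ :
        ∃ T, (T ≤ m - 1 ∧ c T < a (m - T)) ∧
          ∀ t < T, ¬(t ≤ m - 1 ∧ c t < a (m - t)) :=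
      ⟨Nat.find hEx, Nat.find_spec hEx, fun t ht => Nat.find_min hEx ht⟩
    have hmin : ∀ t < T, a (m - t) ≤ c t := by
      intro t ht
      have h2 := hTmin t ht
      push_neg at h2
      exact h2 (by omega)
    by_cases hBig : ∃ kk < T, a (m - kk) + 1 ≤ c kk
    · left
      obtain ⟨kk, hk1, hk2⟩ := hBig
      exact ⟨kk, by omega, fun t ht => hmin t (by omega), hk2⟩
    · exfalso
      push_neg at hBig
      have hane : a (m - T) ≠ 0 := by omega
      rcases h (m - T) (by omega) (by omega) hane with ⟨t, ht1, ht2⟩ | hc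
      · have htT : t < T := by omega
        have := hBig t htT
        omega
      · rw [Nat.sub_sub_self (by omega : T ≤ m)] at hc
        omega

/-- Combinatorial lemma, forward direction. -/
lemma combB (m : ℕ) (hm : 1 ≤ m) (a c : ℕ → ℕ)
    (h : (∃ kk, kk + 2 ≤ m ∧ (∀ t < kk, a (m - t) ≤ c t) ∧ a (m - kk) + 1 ≤ c kk) ∨
      ((∀ t < m - 1, a (m - t) ≤ c t) ∧ a 1 ≤ c (m - 1)))
    (i : ℕ) (h1 : 1 ≤ i) (h2 : i ≤ m) :
    (∃ t, t + i + 1 ≤ m ∧ a (m - t) + 1 ≤ c t) ∨ a i ≤ c (m - i) := by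
  have hmi : m - (m - i) = i := by omega
  rcases h with ⟨kk, hk1, hk2, hk3⟩ | ⟨h3, h4⟩
  · rcases lt_trichotomy kk (m - i) with hc | hc | hc
    · exact Or.inl ⟨kk, by omega, hk3⟩
    · right
      rw [← hc] at hmi ⊢
      rw [← hmi]
      omega
    · right
      have := hk2 (m - i) hc
      rwa [hmi] at this
  · by_cases hi1 : i = 1
    · subst hi1; exact Or.inr h4
    · right
      have := h3 (m - i) (by omega)
      rwa [hmi] at this

variable {k : Type*} [Field k]

lemma prod_pow_eq_monomial {σ : Type*} (s : Finset ℕ) (f : ℕ → σ) (e : ℕ → ℕ) :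
    (∏ t ∈ s, (X (f t) ^ e t : MvPolynomial σ k)) =
      monomial (∑ t ∈ s, Finsupp.single (f t) (e t)) 1 := by
  classical
  induction s using Finset.induction_on with
  | empty => simp
  | insert _ _ h ih =>
    rw [Finset.prod_insert h, Finset.sum_insert h, ih, X_pow_eq_monomial, monomial_mul, one_mul]

def expL (m r : ℕ) (l : ℕ → ℕ) (kk d : ℕ) : Fin (m + 1) →₀ ℕ :=
  (∑ t ∈ Finset.range kk, Finsupp.single ((t : ℕ) : Fin (m + 1)) (partCount r l (m - t))) +
    Finsupp.single ((kk : ℕ) : Fin (m + 1)) d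

lemma gen_eq_monomial (m r : ℕ) (l : ℕ → ℕ) (kk d : ℕ) :
    (∏ t ∈ Finset.range kk, X ((t : ℕ) : Fin (m + 1)) ^ partCount r l (m - t)) *
      X ((kk : ℕ) : Fin (m + 1)) ^ d = (monomial (expL m r l kk d) (1 : k)) := by
  rw [prod_pow_eq_monomial, X_pow_eq_monomial, monomial_mul, one_mul, expL]

lemma expL_apply (m r : ℕ) (l : ℕ → ℕ) (kk d : ℕ) (hkk : kk ≤ m) (j : Fin (m + 1)) :
    expL m r l kk d j =
      (if j.val < kk then partCount r l (m - j.val) else 0) +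
        (if j.val = kk then d else 0) := by
  rw [expL, Finsupp.add_apply, Finsupp.finset_sum_apply]
  congr 1
  · have h1 : ∀ t ∈ Finset.range kk,
        (Finsupp.single ((t : ℕ) : Fin (m + 1)) (partCount r l (m - t))) j =
          if t = j.val then partCount r l (m - t) else 0 := by
      intro t ht
      rw [Finsupp.single_apply]
      congr 1
      simp only [eq_iff_iff]
      rw [Fin.ext_iff, Fin.val_cast_of_lt
        (show t < m + 1 by have := Finset.mem_range.mp ht; omega)]
    rw [Finset.sum_congr rfl h1,
      Finset.sum_ite_eq' (Finset.range kk) j.val (fun t => partCount r l (m - t))]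
    simp [Finset.mem_range]
  · rw [Finsupp.single_apply]
    congr 1
    simp only [eq_iff_iff]
    rw [Fin.ext_iff, Fin.val_cast_of_lt (by omega : kk < m + 1), eq_comm]

lemma expL_le_iff (m r : ℕ) (l : ℕ → ℕ) (kk d : ℕ) (hkk : kk ≤ m) (c : Fin (m + 1) →₀ ℕ) :
    expL m r l kk d ≤ c ↔
      (∀ t < kk, partCount r l (m - t) ≤ c ((t : ℕ) : Fin (m + 1))) ∧
        d ≤ c ((kk : ℕ) : Fin (m + 1)) := by
  rw [Finsupp.le_def]
  constructor
  · intro h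
    constructor
    · intro t ht
      have h3 := h ((t : ℕ) : Fin (m + 1))
      rw [expL_apply m r l kk d hkk] at h3
      rw [Fin.val_cast_of_lt (by omega : t < m + 1)] at h3
      split_ifs at h3 <;> omega
    · have h3 := h ((kk : ℕ) : Fin (m + 1))
      rw [expL_apply m r l kk d hkk] at h3
      rw [Fin.val_cast_of_lt (by omega : kk < m + 1)] at h3
      split_ifs at h3 <;> omega
  · rintro ⟨h1, h2⟩ j
    rw [expL_apply m r l kk d hkk]
    rcases lt_trichotomy j.val kk with hj | hj | hj
    · have h3 := h1 j.val hj
      rw [Fin.cast_val_eq_self j] at h3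
      split_ifs <;> omega
    · have hjj : ((kk : ℕ) : Fin (m + 1)) = j := by rw [← hj, Fin.cast_val_eq_self j]
      rw [hjj] at h2
      split_ifs <;> omega
    · split_ifs <;> omega

def SL (m r : ℕ) (l : ℕ → ℕ) : Set (Fin (m + 1) →₀ ℕ) :=
  { e | ∃ kk, kk + 2 ≤ m ∧ e = expL m r l kk (partCount r l (m - kk) + 1) }
  ∪ { expL m r l (m - 1) (partCount r l 1) }

lemma lexGens_eq (m r : ℕ) (l : ℕ → ℕ) :
    lexGens k m r l = (fun s => monomial s (1 : k)) '' SL m r l := by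
  rw [lexGens, SL, Set.image_union, Set.image_singleton]
  congr 1
  · ext f
    simp only [Set.mem_setOf_eq, Set.mem_image]
    constructor
    · rintro ⟨kk, hk, rfl⟩
      exact ⟨_, ⟨kk, hk, rfl⟩, (gen_eq_monomial m r l kk _).symm⟩
    · rintro ⟨e, ⟨kk, hk, rfl⟩, rfl⟩
      exact ⟨kk, hk, (gen_eq_monomial m r l kk _).symm⟩
  · rw [gen_eq_monomial m r l (m - 1) (partCount r l 1)]

def SQ (m r : ℕ) (l : ℕ → ℕ) (i : ℕ) : Set (Fin (m + 1) →₀ ℕ) :=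
  { e | ∃ t, t + i + 1 ≤ m ∧
      e = Finsupp.single ((t : ℕ) : Fin (m + 1)) (partCount r l (m - t) + 1) }
  ∪ { Finsupp.single (((m - i : ℕ)) : Fin (m + 1)) (partCount r l i) }

lemma qGens_eq (m r : ℕ) (l : ℕ → ℕ) (i : ℕ) :
    ({ f | ∃ t : ℕ, t + i + 1 ≤ m ∧
        f = X ((t : ℕ) : Fin (m + 1)) ^ (partCount r l (m - t) + 1) }
      ∪ { X (((m - i : ℕ)) : Fin (m + 1)) ^ partCount r l i }
      : Set (MvPolynomial (Fin (m + 1)) k)) =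
      (fun s => monomial s (1 : k)) '' SQ m r l i := by
  rw [SQ, Set.image_union, Set.image_singleton]
  congr 1
  · ext f
    simp only [Set.mem_setOf_eq, Set.mem_image]
    constructor
    · rintro ⟨t, ht, rfl⟩
      exact ⟨_, ⟨t, ht, rfl⟩, X_pow_eq_monomial.symm⟩
    · rintro ⟨e, ⟨t, ht, rfl⟩, rfl⟩
      exact ⟨t, ht, X_pow_eq_monomial.symm⟩
  · rw [X_pow_eq_monomial]

end LexAuxProof

/-- The monomial ideal `L(λ)` equals the intersection, over all integers `i`
with `1 ≤ i ≤ m` and `a_i ≠ 0`, of the irreducible monomial ideals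
`⟨x_0^{a_m+1}, x_1^{a_{m−1}+1}, …, x_{m−i−1}^{a_{i+1}+1}, x_{m−i}^{a_i}⟩`. -/
theorem lexIdeal_eq_iInf_irreducible (k : Type*) [Field k] (m r : ℕ)
    (hm : 1 ≤ m) (hr : 1 ≤ r) (l : ℕ → ℕ)
    (hanti : AntitoneOn l (Set.Icc 1 r)) (hpos : ∀ i ∈ Set.Icc 1 r, 1 ≤ l i)
    (hle : l 1 ≤ m) :
    lexIdeal k m r l =
      ⨅ i ∈ (Finset.Icc 1 m).filter (fun i => partCount r l i ≠ 0),
        Ideal.span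
          ({ f | ∃ t : ℕ, t + i + 1 ≤ m ∧
              f = X ((t : ℕ) : Fin (m + 1)) ^ (partCount r l (m - t) + 1) }
            ∪ { X (((m - i : ℕ)) : Fin (m + 1)) ^ partCount r l i }) := by
  classical
  apply Ideal.ext
  intro p
  rw [lexIdeal, LexAuxProof.lexGens_eq, mem_ideal_span_monomial_image]
  simp only [Ideal.mem_iInf, Finset.mem_filter, Finset.mem_Icc]
  constructor
  · intro h i hi
    rw [LexAuxProof.qGens_eq, mem_ideal_span_monomial_image]
    intro xi hxi
    obtain ⟨s, hs, hsle⟩ := h xi hxi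
    have hdisj : (∃ kk, kk + 2 ≤ m ∧
        (∀ t < kk, partCount r l (m - t) ≤ xi ((t : ℕ) : Fin (m + 1))) ∧
        partCount r l (m - kk) + 1 ≤ xi ((kk : ℕ) : Fin (m + 1))) ∨
        ((∀ t < m - 1, partCount r l (m - t) ≤ xi ((t : ℕ) : Fin (m + 1))) ∧
          partCount r l 1 ≤ xi (((m - 1 : ℕ)) : Fin (m + 1))) := by
      rcases hs with ⟨kk, hk, rfl⟩ | hs
      · left
        have h3 := (LexAuxProof.expL_le_iff m r l kk _ (by omega) xi).mp hsle
        exact ⟨kk, hk, h3.1, h3.2⟩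
      · right
        rw [Set.mem_singleton_iff] at hs; subst hs
        exact (LexAuxProof.expL_le_iff m r l (m - 1) _ (by omega) xi).mp hsle
    have key := LexAuxProof.combB m hm (partCount r l)
      (fun u => xi ((u : ℕ) : Fin (m + 1))) hdisj i hi.1.1 hi.1.2
    rcases key with ⟨t, ht1, ht2⟩ | hc
    · exact ⟨_, Or.inl ⟨t, ht1, rfl⟩, Finsupp.single_le_iff.mpr ht2⟩
    · exact ⟨_, Or.inr rfl, Finsupp.single_le_iff.mpr hc⟩
  · intro h xi hxi
    have hyp : ∀ i, 1 ≤ i → i ≤ m → partCount r l i ≠ 0 →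
        (∃ t, t + i + 1 ≤ m ∧
          partCount r l (m - t) + 1 ≤ xi ((t : ℕ) : Fin (m + 1))) ∨
        partCount r l i ≤ xi (((m - i : ℕ)) : Fin (m + 1)) := by
      intro i hi1 hi2 hine
      have hQ := h i ⟨⟨hi1, hi2⟩, hine⟩
      rw [LexAuxProof.qGens_eq, mem_ideal_span_monomial_image] at hQ
      obtain ⟨s, hs, hsle⟩ := hQ xi hxi
      rcases hs with ⟨t, ht, rfl⟩ | hs
      · exact Or.inl ⟨t, ht, Finsupp.single_le_iff.mp hsle⟩
      · right
        rw [Set.mem_singleton_iff] at hs; subst hs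
        exact Finsupp.single_le_iff.mp hsle
    have key := LexAuxProof.combA m hm (partCount r l)
      (fun u => xi ((u : ℕ) : Fin (m + 1))) hyp
    rcases key with ⟨kk, hk1, hk2, hk3⟩ | ⟨h1, h2⟩
    · exact ⟨_, Or.inl ⟨kk, hk1, rfl⟩,
        (LexAuxProof.expL_le_iff m r l kk _ (by omega) xi).mpr ⟨hk2, hk3⟩⟩
    · exact ⟨_, Or.inr rfl,
        (LexAuxProof.expL_le_iff m r l (m - 1) _ (by omega) xi).mpr ⟨h1, h2⟩⟩


end
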